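/- The sets {S_{u}} for u ranging over the ideal polytope P_{F,1−τ}, where S_u = (u + Cone(F_{Γ(u)})) ∩ P_{F,1}, form a partition of the dual polytope P_{F,1}, provided F is non-degenerate (every m×m submatrix of F has full rank). -/

import Mathlib

open Matrix

/-- The signed rows `±F_i` of a matrix `F`. -/
def signedRow {n m : ℕ} (F : Matrix (Fin n) (Fin m) ℝ) : Fin n × Bool → (Fin m → ℝ) :=
  fun p => if p.2 then F p.1 else -F p.1

/-- The cone generated by the signed rows active at `u` on level `1 − τ`:
nonnegative combinations of the signed rows `g` with `⟨g, u⟩ = 1 − τ`. -/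
def activeCone {n m : ℕ} (F : Matrix (Fin n) (Fin m) ℝ) (τ : ℝ) (u : Fin m → ℝ) :
    Set (Fin m → ℝ) :=
  {w | ∃ a : Fin n × Bool → ℝ, (∀ j, 0 ≤ a j) ∧
        (∀ j, a j ≠ 0 → signedRow F j ⬝ᵥ u = 1 - τ) ∧
        w = ∑ j, a j • signedRow F j}

section Aux

open Finset

/-- Conic Carathéodory: a nonnegative combination can be rewritten as a nonnegative
combination with linearly independent support. -/

lemma carath_aux {ι E : Type*} [Fintype ι] [DecidableEq ι]
    [AddCommGroup E] [Module ℝ E] (g : ι → E) :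
    ∀ N (a : ι → ℝ), (univ.filter (fun j => a j ≠ 0)).card ≤ N → (∀ j, 0 ≤ a j) →
    ∃ b : ι → ℝ, (∀ j, 0 ≤ b j) ∧ (∀ j, b j ≠ 0 → a j ≠ 0) ∧
      LinearIndependent ℝ (fun j : {j : ι // b j ≠ 0} => g j) ∧
      ∑ j, b j • g j = ∑ j, a j • g j := by
  intro N
  induction N with
  | zero =>
    intro a hcard ha
    have hz : ∀ j, a j = 0 := by
      intro j
      by_contra hj
      have : j ∈ univ.filter (fun j => a j ≠ 0) := by simp [hj]
      have := Finset.card_pos.mpr ⟨j, this⟩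
      omega
    refine ⟨a, ha, fun j h => h, ?_, rfl⟩
    have : IsEmpty {j : ι // a j ≠ 0} := ⟨fun j => j.2 (hz j.1)⟩
    exact linearIndependent_empty_type
  | succ N ih =>
    intro a hcard ha
    by_cases hli : LinearIndependent ℝ (fun j : {j : ι // a j ≠ 0} => g j)
    · exact ⟨a, ha, fun j h => h, hli, rfl⟩
    · -- get a dependence relation
      obtain ⟨c, hc0, i0, hci0⟩ := Fintype.not_linearIndependent_iff.mp hli
      -- extend to ι
      set c' : ι → ℝ := fun j => if h : a j ≠ 0 then c ⟨j, h⟩ else 0 with hc'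
      have hc'supp : ∀ j, c' j ≠ 0 → a j ≠ 0 := by
        intro j hj
        by_contra h
        simp [hc', h] at hj
      have hsum : ∑ j, c' j • g j = 0 := by
        have h1 : ∑ j, c' j • g j = ∑ j : {j : ι // a j ≠ 0}, c' j.1 • g j.1 := by
          rw [← Finset.sum_subtype (p := fun j => a j ≠ 0)
            (f := fun j => c' j • g j) (univ.filter (fun j => a j ≠ 0)) (by simp)]
          exact (Finset.sum_filter_of_ne (fun j _ hj =>
            hc'supp j (fun h => hj (by simp [h])))).symm
        rw [h1, ← hc0]
        exact Finset.sum_congr rfl fun j _ => by simp [hc', j.2]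
      have hc'i0 : c' i0.1 ≠ 0 := by simpa [hc', i0.2] using hci0
      -- WLOG some coefficient is positive
      obtain ⟨d, hdsupp, hdsum, j1, hj1⟩ :
          ∃ d : ι → ℝ, (∀ j, d j ≠ 0 → a j ≠ 0) ∧ (∑ j, d j • g j = 0) ∧ ∃ j, 0 < d j := by
        rcases lt_or_gt_of_ne hc'i0 with h | h
        · exact ⟨-c', fun j hj => hc'supp j (by simpa [neg_ne_zero] using hj),
            by simp [hsum], i0.1, by simpa using h⟩
        · exact ⟨c', hc'supp, hsum, i0.1, h⟩
      classical
      set T : Finset ι := univ.filter (fun j => 0 < d j) with hT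
      have hTne : T.Nonempty := ⟨j1, by simp [hT, hj1]⟩
      obtain ⟨j0, hj0T, hj0⟩ := Finset.exists_mem_eq_inf' hTne (fun j => a j / d j)
      set t : ℝ := T.inf' hTne (fun j => a j / d j) with ht
      have hdj0 : 0 < d j0 := by simpa [hT] using hj0T
      have haj0 : 0 < a j0 := by
        rcases (ha j0).lt_or_eq with h | h
        · exact h
        · exact absurd (hdsupp j0 (ne_of_gt hdj0)) (by simp [← h])
      have htpos : 0 < t := by
        rw [ht, Finset.lt_inf'_iff]
        intro j hjT
        have hdj : 0 < d j := by simpa [hT] using hjT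
        have haj : 0 < a j := by
          rcases (ha j).lt_or_eq with h | h
          · exact h
          · exact absurd (hdsupp j (ne_of_gt hdj)) (by simp [← h])
        exact div_pos haj hdj
      set a' : ι → ℝ := fun j => a j - t * d j with ha'
      have ha'0 : ∀ j, 0 ≤ a' j := by
        intro j
        rcases le_or_gt (d j) 0 with h | h
        · have : t * d j ≤ 0 := mul_nonpos_of_nonneg_of_nonpos htpos.le h
          simp only [ha']; linarith [ha j]
        · have hle : t ≤ a j / d j := Finset.inf'_le _ (by simp [hT, h])
          have := (le_div_iff₀ h).mp hle
          simp only [ha']; linarith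
      have ha'supp : ∀ j, a' j ≠ 0 → a j ≠ 0 := by
        intro j hj
        by_contra h
        have hd : d j = 0 := by
          by_contra hd
          exact (hdsupp j hd) h
        simp [ha', h, hd] at hj
      have ha'j0 : a' j0 = 0 := by
        simp only [ha', hj0]
        field_simp
        ring
      have hcard' : (univ.filter (fun j => a' j ≠ 0)).card ≤ N := by
        have hsub : univ.filter (fun j => a' j ≠ 0) ⊆
            (univ.filter (fun j => a j ≠ 0)).erase j0 := by
          intro j hj
          simp only [mem_filter, mem_univ, true_and] at hj
          refine Finset.mem_erase.mpr ⟨?_, by simp [ha'supp j hj]⟩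
          rintro rfl
          exact hj ha'j0
        have h1 := Finset.card_le_card hsub
        have hj0mem : j0 ∈ univ.filter (fun j => a j ≠ 0) := by simp [ne_of_gt haj0]
        have h2 := Finset.card_erase_of_mem hj0mem
        omega
      have hsum' : ∑ j, a' j • g j = ∑ j, a j • g j := by
        simp only [ha', sub_smul, Finset.sum_sub_distrib, mul_smul]
        rw [← Finset.smul_sum, hdsum, smul_zero, sub_zero]
      obtain ⟨b, hb0, hbsupp, hbli, hbsum⟩ := ih a' hcard' ha'0
      exact ⟨b, hb0, fun j hj => ha'supp j (hbsupp j hj), hbli, hbsum.trans hsum'⟩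

lemma sum_subtype_eq_of_vanish {ι E : Type*} [Fintype ι] [AddCommMonoid E]
    (s : Finset ι) (f : ι → E) (hf : ∀ j ∉ s, f j = 0) :
    ∑ j : {j // j ∈ s}, f j.1 = ∑ j : ι, f j := by
  rw [Finset.sum_coe_sort s f]
  exact Finset.sum_subset (Finset.subset_univ s) (fun j _ hj => hf j hj)

lemma isClosed_finitely_generated_cone {ι : Type*} [Fintype ι] [DecidableEq ι] {E : Type*}
    [NormedAddCommGroup E] [NormedSpace ℝ E] [FiniteDimensional ℝ E]
    (g : ι → E) (P : ι → Prop) :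
    IsClosed {x : E | ∃ a : ι → ℝ, (∀ j, 0 ≤ a j) ∧ (∀ j, a j ≠ 0 → P j) ∧
      x = ∑ j, a j • g j} := by
  classical
  set piece : Finset ι → Set E := fun s =>
    (fun a : {j // j ∈ s} → ℝ => ∑ j, a j • g j.1) '' {a | ∀ j, 0 ≤ a j} with hpiece
  have key : {x : E | ∃ a : ι → ℝ, (∀ j, 0 ≤ a j) ∧ (∀ j, a j ≠ 0 → P j) ∧
      x = ∑ j, a j • g j} =
      ⋃ (s : {s : Finset ι // (∀ j ∈ s, P j) ∧
          LinearIndependent ℝ (fun j : {j // j ∈ s} => g j.1)}), piece s.1 := by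
    ext x
    simp only [Set.mem_setOf_eq, Set.mem_iUnion, hpiece, Set.mem_image]
    constructor
    · rintro ⟨a, ha0, haP, rfl⟩
      obtain ⟨b, hb0, hbsupp, hbli, hbsum⟩ :=
        carath_aux g (univ.filter (fun j => a j ≠ 0)).card a le_rfl ha0
      set s : Finset ι := univ.filter (fun j => b j ≠ 0) with hs
      have hmem : ∀ j, j ∈ s ↔ b j ≠ 0 := by intro j; simp [hs]
      have hli : LinearIndependent ℝ (fun j : {j // j ∈ s} => g j.1) := by
        exact (linearIndependent_equiv' (Equiv.subtypeEquivRight (fun j => (hmem j).symm))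
          (by funext j; simp)).mp hbli
      refine ⟨⟨s, fun j hj => haP j (hbsupp j ((hmem j).mp hj)), hli⟩,
        fun j => b j.1, fun j => hb0 j.1, ?_⟩
      rw [← hbsum]
      exact sum_subtype_eq_of_vanish s (fun j => b j • g j)
        (fun j hj => by simp [not_not.mp (fun h => hj ((hmem j).mpr h))])
    · rintro ⟨⟨s, hsP, _⟩, a, ha0, rfl⟩
      refine ⟨fun j => if h : j ∈ s then a ⟨j, h⟩ else 0, ?_, ?_, ?_⟩
      · intro j; by_cases h : j ∈ s <;> simp [h, ha0]
      · intro j hj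
        by_cases h : j ∈ s
        · exact hsP j h
        · simp [h] at hj
      · refine Eq.trans ?_ (sum_subtype_eq_of_vanish s
          (fun j => (if h : j ∈ s then a ⟨j, h⟩ else 0) • g j)
          (fun j hj => by simp [hj]))
        apply Finset.sum_congr rfl
        intro j _
        simp [j.2]
  rw [key]
  apply isClosed_iUnion_of_finite
  rintro ⟨s, hsP, hli⟩
  let L : ({j // j ∈ s} → ℝ) →ₗ[ℝ] E :=
    { toFun := fun a => ∑ j, a j • g j.1
      map_add' := by intro a b; simp [add_smul, Finset.sum_add_distrib]
      map_smul' := by intro c a; simp [mul_smul, Finset.smul_sum] }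
  have hker : LinearMap.ker L = ⊥ := by
    rw [LinearMap.ker_eq_bot']
    intro a haL
    ext j
    exact Fintype.linearIndependent_iff.mp hli a haL j
  have hclosed : IsClosed {a : {j // j ∈ s} → ℝ | ∀ j, 0 ≤ a j} := by
    have : {a : {j // j ∈ s} → ℝ | ∀ j, 0 ≤ a j} = ⋂ j, {a | 0 ≤ a j} := by
      ext a; simp
    rw [this]
    exact isClosed_iInter fun j => isClosed_le continuous_const (continuous_apply j)
  exact (L.isClosedEmbedding_of_injective hker).isClosedMap _ hclosed

lemma sum_dot {ι : Type*} [Fintype ι] {m : ℕ} (f : ι → (Fin m → ℝ)) (v : Fin m → ℝ) :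
    (∑ j, f j) ⬝ᵥ v = ∑ j, f j ⬝ᵥ v := by
  simp only [dotProduct, Finset.sum_apply, Finset.sum_mul]
  exact Finset.sum_comm


lemma inner_eq_dot {m : ℕ} (x y : EuclideanSpace ℝ (Fin m)) :
    (inner ℝ x y : ℝ) = x ⬝ᵥ y := by
  simp [PiLp.inner_apply, RCLike.inner_apply, dotProduct, mul_comm]


end Aux

/-- Key monotonicity: if `w - u` is in the active cone at `u`, then `u` maximizes
`⟨w - u, ·⟩` over the small polytope. -/
lemma active_cone_inner_le {n m : ℕ} {F : Matrix (Fin n) (Fin m) ℝ} {τ : ℝ} {w u x : Fin m → ℝ}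
    (hu : (w - u) ∈ activeCone F τ u) (hx : ∀ i, |F i ⬝ᵥ x| ≤ 1 - τ) :
    (w - u) ⬝ᵥ (x - u) ≤ 0 := by
  obtain ⟨a, ha0, hact, hsum⟩ := hu
  rw [hsum, sum_dot]
  apply Finset.sum_nonpos
  intro j _
  rw [smul_dotProduct]
  by_cases hj : a j = 0
  · simp [hj]
  · have hactj := hact j hj
    have hxj : signedRow F j ⬝ᵥ x ≤ 1 - τ := by
      rcases j with ⟨i, b⟩
      cases b
      · have := (abs_le.mp (hx i)).1
        simp only [signedRow, Bool.false_eq_true, if_false, neg_dotProduct]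
        linarith
      · simpa [signedRow] using (abs_le.mp (hx i)).2
    have hle : signedRow F j ⬝ᵥ (x - u) ≤ 0 := by
      rw [dotProduct_sub, hactj]
      linarith
    exact smul_nonpos_of_nonneg_of_nonpos (ha0 j) hle

/-- Partition of the dual polytope: if `F` is non-degenerate (every `m` rows are
linearly independent), then every point `w` of `P_{F,1} = {u : ‖Fu‖_∞ ≤ 1}` belongs to
`S_u = (u + Cone(F_{Γ(u)})) ∩ P_{F,1}` for a unique `u` in the ideal polytope
`P_{F,1−τ}`. -/
theorem dual_polytope_partition {n m : ℕ}
    (F : Matrix (Fin n) (Fin m) ℝ) (τ : ℝ) (hτ0 : 0 < τ) (hτ1 : τ < 1)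
    (hnd : ∀ s : Finset (Fin n), s.card = m →
      LinearIndependent ℝ (fun i : s => F (i : Fin n))) :
    ∀ w : Fin m → ℝ, (∀ i, |F i ⬝ᵥ w| ≤ 1) →
      ∃! u : Fin m → ℝ,
        (∀ i, |F i ⬝ᵥ u| ≤ 1 - τ) ∧ (w - u) ∈ activeCone F τ u := by
  intro w _hw
  classical
  have hτ' : (0 : ℝ) < 1 - τ := by linarith
  set g : Fin n × Bool → (Fin m → ℝ) := signedRow F with hg
  have habs : ∀ x : Fin m → ℝ, (∀ i, |F i ⬝ᵥ x| ≤ 1 - τ) ↔ (∀ j, g j ⬝ᵥ x ≤ 1 - τ) := by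
    intro x
    constructor
    · rintro h ⟨i, b⟩
      cases b
      · have := (abs_le.mp (h i)).1
        simp only [hg, signedRow, Bool.false_eq_true, if_false, neg_dotProduct]
        linarith
      · simpa [hg, signedRow] using (abs_le.mp (h i)).2
    · intro h i
      rw [abs_le]
      have h1 := h (i, true)
      have h2 := h (i, false)
      simp only [hg, signedRow, if_true, Bool.false_eq_true, if_false,
        neg_dotProduct] at h1 h2
      constructor <;> linarith
  -- obtain the metric projection of w onto the small polytope
  obtain ⟨u, huK, hvar'⟩ : ∃ u : Fin m → ℝ, (∀ j, g j ⬝ᵥ u ≤ 1 - τ) ∧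
      ∀ x : Fin m → ℝ, (∀ j, g j ⬝ᵥ x ≤ 1 - τ) → (w - u) ⬝ᵥ (x - u) ≤ 0 := by
    set K : Set (EuclideanSpace ℝ (Fin m)) := {x | ∀ j, g j ⬝ᵥ x ≤ 1 - τ} with hK
    have hKne : K.Nonempty := ⟨0, fun j => by simp [dotProduct_zero]; linarith⟩
    have hKconvex : Convex ℝ K := by
      have key : ∀ (x y : Fin m → ℝ) (a b : ℝ), 0 ≤ a → 0 ≤ b → a + b = 1 →
          (∀ j, g j ⬝ᵥ x ≤ 1 - τ) → (∀ j, g j ⬝ᵥ y ≤ 1 - τ) →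
          ∀ j, g j ⬝ᵥ (a • x + b • y) ≤ 1 - τ := by
        intro x y a b ha hb hab hx hy j
        have hcalc : g j ⬝ᵥ (a • x + b • y) = a * (g j ⬝ᵥ x) + b * (g j ⬝ᵥ y) := by
          rw [dotProduct_add, dotProduct_smul, dotProduct_smul,
            smul_eq_mul, smul_eq_mul]
        rw [hcalc]
        calc a * (g j ⬝ᵥ x) + b * (g j ⬝ᵥ y) ≤ a * (1 - τ) + b * (1 - τ) := by
              gcongr
              · exact hx j
              · exact hy j
          _ = 1 - τ := by rw [← add_mul, hab, one_mul]
      exact fun x hx y hy a b ha hb hab => key x.ofLp y.ofLp a b ha hb hab hx hy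
    have hdotcont : ∀ v : Fin m → ℝ,
        Continuous (fun x : EuclideanSpace ℝ (Fin m) => v ⬝ᵥ x) := by
      intro v
      let v' : EuclideanSpace ℝ (Fin m) := WithLp.toLp 2 v
      have := Continuous.inner (𝕜 := ℝ) (E := EuclideanSpace ℝ (Fin m))
        (continuous_const : Continuous fun _ : EuclideanSpace ℝ (Fin m) => v')
        (continuous_id : Continuous fun x : EuclideanSpace ℝ (Fin m) => x)
      simpa [inner_eq_dot, v'] using this
    have hKclosed : IsClosed K := by
      have hKeq : K = ⋂ j, {x : EuclideanSpace ℝ (Fin m) | g j ⬝ᵥ x ≤ 1 - τ} := by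
        ext x; simp [hK]
      rw [hKeq]
      exact isClosed_iInter fun j => isClosed_le (hdotcont (g j)) continuous_const
    obtain ⟨u, huK, hproj⟩ :=
      exists_norm_eq_iInf_of_complete_convex hKne hKclosed.isComplete hKconvex (WithLp.toLp 2 w)
    have hvar := (norm_eq_iInf_iff_real_inner_le_zero hKconvex huK).mp hproj
    refine ⟨u.ofLp, huK, fun x hx => ?_⟩
    have hineq := hvar (WithLp.toLp 2 x) hx
    simpa [inner_eq_dot] using hineq
  -- existence: w - u is in the active cone at u
  have hmemS : (w - u) ∈ activeCone F τ u := by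
    by_contra hnot
    set C : ConvexCone ℝ (EuclideanSpace ℝ (Fin m)) :=
      { carrier := {x : EuclideanSpace ℝ (Fin m) | ∃ a : Fin n × Bool → ℝ, (∀ j, 0 ≤ a j) ∧
          (∀ j, a j ≠ 0 → g j ⬝ᵥ u = 1 - τ) ∧ x.ofLp = ∑ j, a j • g j}
        smul_mem' := by
          rintro c hc x ⟨a, ha0, hact, hx⟩
          refine ⟨fun j => c * a j, fun j => mul_nonneg hc.le (ha0 j), fun j hj => ?_, ?_⟩
          · refine hact j fun h => hj ?_
            simp [h]
          · rw [WithLp.ofLp_smul, hx, Finset.smul_sum]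
            apply Finset.sum_congr rfl
            intro j _
            rw [smul_smul]
        add_mem' := by
          rintro x ⟨a, ha0, hacta, hx⟩ y ⟨b, hb0, hactb, hy⟩
          refine ⟨fun j => a j + b j, fun j => add_nonneg (ha0 j) (hb0 j), fun j hj => ?_, ?_⟩
          · by_cases ha : a j = 0
            · refine hactb j fun hb => hj (by simp [ha, hb])
            · exact hacta j ha
          · rw [WithLp.ofLp_add, hx, hy, ← Finset.sum_add_distrib]
            apply Finset.sum_congr rfl
            intro j _
            rw [add_smul] } with hC
    have hCne : (C : Set (EuclideanSpace ℝ (Fin m))).Nonempty :=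
      ⟨0, ⟨0, fun j => le_rfl, fun j hj => absurd rfl hj, by simp⟩⟩
    have hCclosed : IsClosed (C : Set (EuclideanSpace ℝ (Fin m))) :=
      (isClosed_finitely_generated_cone g (fun j => g j ⬝ᵥ u = 1 - τ)).preimage
        (PiLp.continuous_ofLp 2 _)
    have hnotC : ∀ x : Fin m → ℝ, x = w - u → WithLp.toLp 2 x ∉
        (C : Set (EuclideanSpace ℝ (Fin m))) := by
      rintro x rfl hmem
      exact hnot hmem
    obtain ⟨y, hy1, hy2⟩ :=
      ProperCone.hyperplane_separation'
        ⟨C.toPointedCone (ConvexCone.Pointed.of_nonempty_of_isClosed hCne hCclosed), hCclosed⟩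
        (hnotC (w - u) rfl)
    set z : Fin m → ℝ := -y.ofLp with hz
    rw [inner_eq_dot, WithLp.ofLp_toLp, dotProduct_comm] at hy2
    have hzact : ∀ j, g j ⬝ᵥ u = 1 - τ → g j ⬝ᵥ z ≤ 0 := by
      intro j hj
      have hgC := hy1 (WithLp.toLp 2 (g j)) ⟨fun j' => if j' = j then 1 else 0,
        fun j' => by positivity,
        fun j' hj' => by
          rcases eq_or_ne j' j with rfl | hne
          · exact hj
          · simp [hne] at hj',
        by simp [ite_smul]⟩
      rw [inner_eq_dot, WithLp.ofLp_toLp] at hgC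
      rw [hz, dotProduct_neg]
      linarith
    have hvz : 0 < (w - u) ⬝ᵥ z := by
      rw [hz, dotProduct_neg, dotProduct_comm]
      linarith
    set f : Fin n × Bool → ℝ := fun j =>
      if 0 < g j ⬝ᵥ z then (1 - τ - g j ⬝ᵥ u) / (g j ⬝ᵥ z) else 1 with hf
    have hfpos : ∀ j, 0 < f j := by
      intro j
      simp only [hf]
      split_ifs with h
      · apply div_pos _ h
        have hle : g j ⬝ᵥ u ≤ 1 - τ := huK j
        rcases hle.lt_or_eq with hlt | heq
        · linarith
        · exact absurd (hzact j heq) (not_le.mpr h)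
      · exact one_pos
    set Q : Finset ℝ := insert 1 (Finset.univ.image f) with hQ
    have hQne : Q.Nonempty := ⟨1, Finset.mem_insert_self _ _⟩
    set ε : ℝ := Q.min' hQne with hε
    have hεle : ∀ j, ε ≤ f j := by
      intro j
      apply Finset.min'_le
      rw [hQ]
      exact Finset.mem_insert_of_mem (Finset.mem_image_of_mem f (Finset.mem_univ j))
    have hεpos : 0 < ε := by
      have hmem := Q.min'_mem hQne
      rw [← hε, hQ, Finset.mem_insert] at hmem
      rcases hmem with h | h
      · rw [h]; exact one_pos
      · obtain ⟨j, _, hj⟩ := Finset.mem_image.mp h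
        rw [← hj]
        exact hfpos j
    have hstep : ∀ j, g j ⬝ᵥ (u + ε • z) ≤ 1 - τ := by
      intro j
      have hcalc : g j ⬝ᵥ (u + ε • z) = g j ⬝ᵥ u + ε * (g j ⬝ᵥ z) := by
        rw [dotProduct_add, dotProduct_smul, smul_eq_mul]
      rw [hcalc]
      rcases le_or_gt (g j ⬝ᵥ z) 0 with h | h
      · have h1 : ε * (g j ⬝ᵥ z) ≤ 0 := mul_nonpos_of_nonneg_of_nonpos hεpos.le h
        have h2 := huK j
        linarith
      · have hfj : f j = (1 - τ - g j ⬝ᵥ u) / (g j ⬝ᵥ z) := by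
          simp only [hf]; rw [if_pos h]
        have h1 : ε ≤ (1 - τ - g j ⬝ᵥ u) / (g j ⬝ᵥ z) := hfj ▸ hεle j
        have h2 := (le_div_iff₀ h).mp h1
        linarith
    have hcontra := hvar' (u + ε • z) hstep
    have heq : (w - u) ⬝ᵥ (u + ε • z - u) = ε * ((w - u) ⬝ᵥ z) := by
      rw [add_sub_cancel_left, dotProduct_smul, smul_eq_mul]
    rw [heq] at hcontra
    nlinarith
  -- assemble existence and uniqueness
  have huK' : ∀ i, |F i ⬝ᵥ u| ≤ 1 - τ := (habs u).mpr huK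
  refine ⟨u, ⟨huK', hmemS⟩, ?_⟩
  rintro u' ⟨hu'K, hu'mem⟩
  have h1 : (w - u') ⬝ᵥ (u - u') ≤ 0 := active_cone_inner_le hu'mem huK'
  have h2 : (w - u) ⬝ᵥ (u' - u) ≤ 0 := active_cone_inner_le hmemS hu'K
  have hd : (u' - u) ⬝ᵥ (u' - u) ≤ 0 := by
    have e1 : (w - u) ⬝ᵥ (u' - u) - (w - u') ⬝ᵥ (u' - u) = (u' - u) ⬝ᵥ (u' - u) := by
      rw [← sub_dotProduct]
      congr 1
      abel
    have e2 : (w - u') ⬝ᵥ (u' - u) = -((w - u') ⬝ᵥ (u - u')) := by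
      rw [← dotProduct_neg]
      congr 1
      abel
    rw [e2] at e1
    linarith
  have hd0 : (u' - u) ⬝ᵥ (u' - u) = 0 := by
    have hnn : 0 ≤ (u' - u) ⬝ᵥ (u' - u) :=
      Finset.sum_nonneg fun i _ => mul_self_nonneg _
    linarith
  have hzero := dotProduct_self_eq_zero.mp hd0
  rwa [sub_eq_zero] at hzero
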